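/- For any fixed t ≥ 0, the function s ↦ Z_s Z_{t-s} / Z_t on [0, t] is decreasing on [0, t/2] and increasing on [t/2, t]. In particular its minimum over [0,t] is Z_{t/2}² / Z_t. -/

import Mathlib

open MeasureTheory Real Set

/-- Laplace transform of a measure on ℝ. -/
noncomputable def lapZ (μ : Measure ℝ) (t : ℝ) : ℝ := ∫ x, Real.exp (-t * x) ∂μ

section aux
variable {μ : Measure ℝ} [IsProbabilityMeasure μ]

noncomputable def lapL (μ : Measure ℝ) (t : ℝ) : ENNReal :=
  ∫⁻ x, ENNReal.ofReal (Real.exp (-t * x)) ∂μ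

lemma lapL_meas (s : ℝ) :
    Measurable fun x : ℝ => ENNReal.ofReal (Real.exp (-s * x)) :=
  ENNReal.measurable_ofReal.comp (Real.measurable_exp.comp (measurable_id.const_mul (-s)))

lemma lapL_ne_top {c : ℝ} (hc : μ (Set.Iio c) = 0) {s : ℝ} (hs : 0 ≤ s) :
    lapL μ s ≠ ⊤ := by
  have hae : ∀ᵐ x ∂μ, c ≤ x := by
    rw [ae_iff]; simp only [not_le]; exact hc
  have h : lapL μ s ≤ ∫⁻ _, ENNReal.ofReal (Real.exp (-s * c)) ∂μ := by
    refine lintegral_mono_ae (hae.mono fun x hx => ?_)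
    exact ENNReal.ofReal_le_ofReal (Real.exp_le_exp.2 (by nlinarith))
  refine ne_top_of_le_ne_top ?_ h
  simp [lintegral_const]

lemma lapL_pos {s : ℝ} : 0 < lapL μ s := by
  by_contra h
  push_neg at h
  have h0 : lapL μ s = 0 := le_antisymm h zero_le
  rw [lapL, lintegral_eq_zero_iff (lapL_meas s)] at h0
  have h1 : ∀ᵐ x ∂μ, False := h0.mono fun x hx => by
    simp only [Pi.zero_apply, ENNReal.ofReal_eq_zero] at hx
    exact absurd hx (not_le.2 (Real.exp_pos _))
  have h2 : μ Set.univ = 0 := by simpa [ae_iff] using h1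
  simp at h2

omit [IsProbabilityMeasure μ] in
lemma lapZ_eq_toReal (s : ℝ) : lapZ μ s = (lapL μ s).toReal := by
  rw [lapZ, integral_eq_lintegral_of_nonneg_ae]
  · rfl
  · exact Filter.Eventually.of_forall fun x => (Real.exp_pos _).le
  · exact ((Real.measurable_exp.comp (measurable_id.const_mul (-s)))).aestronglyMeasurable

lemma lapZ_pos {c : ℝ} (hc : μ (Set.Iio c) = 0) {s : ℝ} (hs : 0 ≤ s) :
    0 < lapZ μ s := by
  rw [lapZ_eq_toReal]
  exact ENNReal.toReal_pos lapL_pos.ne' (lapL_ne_top hc hs)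

omit [IsProbabilityMeasure μ] in
/-- Hölder / log-convexity at the lintegral level. -/
lemma lapL_holder {a b p q : ℝ} (hp : 0 ≤ p) (hq : 0 ≤ q) (hpq : p + q = 1) :
    lapL μ (p * a + q * b) ≤ lapL μ a ^ p * lapL μ b ^ q := by
  have key := ENNReal.lintegral_mul_norm_pow_le (μ := μ)
    (lapL_meas a).aemeasurable (lapL_meas b).aemeasurable hp hq hpq
  refine le_trans (le_of_eq ?_) key
  refine lintegral_congr fun x => ?_
  rw [ENNReal.ofReal_rpow_of_pos (Real.exp_pos _),
      ENNReal.ofReal_rpow_of_pos (Real.exp_pos _),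
      ← Real.exp_mul, ← Real.exp_mul, ← ENNReal.ofReal_mul (Real.exp_pos _).le,
      ← Real.exp_add]
  ring_nf

/-- Hölder at the level of `lapZ`. -/
lemma lapZ_holder {c : ℝ} (hc : μ (Set.Iio c) = 0) {a b p q : ℝ}
    (ha : 0 ≤ a) (hb : 0 ≤ b) (hp : 0 ≤ p) (hq : 0 ≤ q) (hpq : p + q = 1) :
    lapZ μ (p * a + q * b) ≤ lapZ μ a ^ p * lapZ μ b ^ q := by
  rw [lapZ_eq_toReal, lapZ_eq_toReal, lapZ_eq_toReal,
      ENNReal.toReal_rpow, ENNReal.toReal_rpow, ← ENNReal.toReal_mul]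
  refine ENNReal.toReal_mono ?_ (lapL_holder hp hq hpq)
  exact ENNReal.mul_ne_top (ENNReal.rpow_ne_top_of_nonneg hp (lapL_ne_top hc ha))
    (ENNReal.rpow_ne_top_of_nonneg hq (lapL_ne_top hc hb))

/-- Key two-point rearrangement inequality. -/
lemma lapZ_key {c : ℝ} (hc : μ (Set.Iio c) = 0) {a' a b b' : ℝ}
    (h0 : 0 ≤ a') (h1 : a' ≤ a) (h2 : a ≤ b) (h3 : b ≤ b') (hsum : a + b = a' + b') :
    lapZ μ a * lapZ μ b ≤ lapZ μ a' * lapZ μ b' := by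
  rcases eq_or_lt_of_le (h1.trans (h2.trans h3)) with heq | hab
  · have haa : a = a' := le_antisymm (by linarith) h1
    have hbb : b = b' := by linarith
    rw [haa, hbb]
  · set p : ℝ := (b' - a) / (b' - a') with hpdef
    set q : ℝ := 1 - p with hqdef
    have hne : b' - a' ≠ 0 := ne_of_gt (by linarith)
    have hpm : p * (b' - a') = b' - a := div_mul_cancel₀ _ hne
    have hp : 0 ≤ p := div_nonneg (by linarith) (by linarith)
    have hq : 0 ≤ q := by
      have : p ≤ 1 := by
        rw [hpdef, div_le_one (by linarith)]; linarith
      simp only [hqdef]; linarith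
    have hpq : p + q = 1 := by simp [hqdef]
    have hxa : p * a' + q * b' = a := by
      simp only [hqdef]; nlinarith [hpm]
    have hxb : q * a' + p * b' = b := by
      simp only [hqdef]; nlinarith [hpm]
    have hb'0 : 0 ≤ b' := by linarith
    have H1 : lapZ μ a ≤ lapZ μ a' ^ p * lapZ μ b' ^ q := by
      rw [← hxa]; exact lapZ_holder hc h0 hb'0 hp hq hpq
    have H2 : lapZ μ b ≤ lapZ μ a' ^ q * lapZ μ b' ^ p := by
      rw [← hxb]; exact lapZ_holder hc h0 hb'0 hq hp (by linarith)
    have hZa' : 0 < lapZ μ a' := lapZ_pos hc h0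
    have hZb' : 0 < lapZ μ b' := lapZ_pos hc hb'0
    have hZa : 0 ≤ lapZ μ a := (lapZ_pos hc (le_trans h0 h1)).le
    calc lapZ μ a * lapZ μ b ≤ (lapZ μ a' ^ p * lapZ μ b' ^ q) * (lapZ μ a' ^ q * lapZ μ b' ^ p) := by
          refine mul_le_mul H1 H2 ?_ ?_
          · exact (lapZ_pos hc (le_trans h0 (h1.trans h2))).le
          · positivity
      _ = lapZ μ a' * lapZ μ b' := by
          rw [mul_mul_mul_comm, ← Real.rpow_add hZa', ← Real.rpow_add hZb', hpq,
            (by linarith : q + p = 1), Real.rpow_one, Real.rpow_one]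

end aux

/-- For fixed `t ≥ 0`, the function `s ↦ Z_s Z_{t-s} / Z_t` is decreasing
on `[0, t/2]` and increasing on `[t/2, t]`; in particular its minimum on `[0,t]` is
`Z_{t/2}² / Z_t`. -/
theorem stmt_1 (μ : Measure ℝ) [IsProbabilityMeasure μ]
    (hbdd : ∃ c : ℝ, μ (Set.Iio c) = 0) (t : ℝ) (ht : 0 ≤ t) :
    AntitoneOn (fun s => lapZ μ s * lapZ μ (t - s) / lapZ μ t) (Set.Icc 0 (t / 2))
      ∧ MonotoneOn (fun s => lapZ μ s * lapZ μ (t - s) / lapZ μ t) (Set.Icc (t / 2) t)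
      ∧ ∀ s ∈ Set.Icc 0 t,
          lapZ μ (t / 2) ^ 2 / lapZ μ t ≤ lapZ μ s * lapZ μ (t - s) / lapZ μ t := by
  obtain ⟨c, hc⟩ := hbdd
  have hZt : 0 < lapZ μ t := lapZ_pos hc ht
  have hanti : AntitoneOn (fun s => lapZ μ s * lapZ μ (t - s) / lapZ μ t)
      (Set.Icc 0 (t / 2)) := by
    intro s hs s' hs' hss'
    have h := lapZ_key hc (a' := s) (a := s') (b := t - s') (b' := t - s)
      hs.1 hss' (by have := hs'.2; linarith) (by linarith) (by ring)
    exact div_le_div_of_nonneg_right h hZt.le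
  have hmono : MonotoneOn (fun s => lapZ μ s * lapZ μ (t - s) / lapZ μ t)
      (Set.Icc (t / 2) t) := by
    intro s hs s' hs' hss'
    have h := lapZ_key hc (a' := t - s') (a := t - s) (b := s) (b' := s')
      (by have := hs'.2; linarith) (by linarith) (by have := hs.1; linarith) hss' (by ring)
    have h' : lapZ μ s * lapZ μ (t - s) ≤ lapZ μ s' * lapZ μ (t - s') := by linarith [h]
    exact div_le_div_of_nonneg_right h' hZt.le
  refine ⟨hanti, hmono, fun s hs => ?_⟩
  have hmid : lapZ μ (t / 2) * lapZ μ (t - t / 2) = lapZ μ (t / 2) ^ 2 := by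
    rw [(by ring : t - t / 2 = t / 2), sq]
  rcases le_or_gt s (t / 2) with h | h
  · have := hanti ⟨hs.1, h⟩ ⟨by linarith, le_rfl⟩ h
    simpa [hmid] using this
  · have := hmono ⟨le_rfl, by linarith⟩ ⟨h.le, hs.2⟩ h.le
    simpa [hmid] using this
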